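/- Let f ∈ G(Δ) and let S = {F_t}_{t≥0} be the one-parameter continuous semigroup of holomorphic self-mappings of Δ generated by f. Then every F_t (t ≥ 0) is a linear fractional transformation if and only if f is a polynomial of degree at most 2. -/

import Mathlib

open Complex Filter Set Metric ComplexConjugate

noncomputable section

/-- The open unit disk in ℂ. -/
def unitDisk : Set ℂ := {z : ℂ | ‖z‖ < 1}

/-- Stolz angle (nontangential approach region) with vertex `ζ` and aperture `k`. -/
def stolzAngle (ζ : ℂ) (k : ℝ) : Set ℂ :=
  {z : ℂ | z ∈ unitDisk ∧ ‖z - ζ‖ < k * (1 - ‖z‖)}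

/-- Angular (nontangential) limit of `g` at the boundary point `ζ` equals `L`:
the limit of `g` within every Stolz angle with vertex `ζ`. -/
def AngularLimAt (g : ℂ → ℂ) (ζ L : ℂ) : Prop :=
  ∀ k : ℝ, 1 < k → Filter.Tendsto g (nhdsWithin ζ (stolzAngle ζ k)) (nhds L)

/-- `g` belongs to `C_A^3(1)` with angular boundary values `a0 = g(1)`, `a1 = g'(1)`,
`a2 = g''(1)`, `a3 = g'''(1)`: the remainder of the third order Taylor expansion at `1`
is `o((z-1)^3)` angularly. -/
def CA3At1 (g : ℂ → ℂ) (a0 a1 a2 a3 : ℂ) : Prop :=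
  AngularLimAt (fun z =>
    (g z - (a0 + a1 * (z - 1) + a2 / 2 * (z - 1) ^ 2 + a3 / 6 * (z - 1) ^ 3)) / (z - 1) ^ 3) 1 0

/-- Holomorphic self-mapping of the unit disk. -/
def HolSelfMap (F : ℂ → ℂ) : Prop :=
  DifferentiableOn ℂ F unitDisk ∧ Set.MapsTo F unitDisk unitDisk

/-- `F` is a linear fractional transformation on the unit disk. -/
def IsLFTOn (F : ℂ → ℂ) : Prop :=
  ∃ a b c d : ℂ, a * d - b * c ≠ 0 ∧ ∀ z ∈ unitDisk, F z = (a * z + b) / (c * z + d)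

/-- `F` is a (holomorphic) automorphism of the unit disk. -/
def IsAutomorphismOfDisk (F : ℂ → ℂ) : Prop :=
  HolSelfMap F ∧ ∃ G : ℂ → ℂ, HolSelfMap G ∧
    (∀ z ∈ unitDisk, G (F z) = z) ∧ (∀ z ∈ unitDisk, F (G z) = z)

/-- The horocycle `D(1,k)` internally tangent to the unit circle at 1. -/
def horocycle (k : ℝ) : Set ℂ :=
  {z : ℂ | z ∈ unitDisk ∧ ‖1 - z‖ ^ 2 / (1 - ‖z‖ ^ 2) < k}

/-- `τ` is the Denjoy–Wolff point of `F`: the iterates converge pointwise to `τ`. -/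
def IsDenjoyWolffPt (F : ℂ → ℂ) (τ : ℂ) : Prop :=
  ∀ z ∈ unitDisk, Filter.Tendsto (fun n : ℕ => F^[n] z) Filter.atTop (nhds τ)

/-- A one-parameter continuous semigroup of holomorphic self-mappings of the disk. -/
def IsSemigroupOnDisk (S : ℝ → ℂ → ℂ) : Prop :=
  (∀ t : ℝ, 0 ≤ t → HolSelfMap (S t)) ∧
  (∀ t : ℝ, 0 ≤ t → ∀ s : ℝ, 0 ≤ s → ∀ z ∈ unitDisk, S (t + s) z = S t (S s z)) ∧
  (∀ z ∈ unitDisk, Filter.Tendsto (fun t : ℝ => S t z) (nhdsWithin 0 (Set.Ioi 0)) (nhds z))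

/-- `f` is the infinitesimal generator of the semigroup `S`. -/
def Generates (f : ℂ → ℂ) (S : ℝ → ℂ → ℂ) : Prop :=
  IsSemigroupOnDisk S ∧
  ∀ z ∈ unitDisk,
    Filter.Tendsto (fun t : ℝ => (z - S t z) / (t : ℂ)) (nhdsWithin 0 (Set.Ioi 0)) (nhds (f z))

/-- `f` belongs to the class `G(Δ)` of infinitesimal generators on the disk. -/
def IsGenerator (f : ℂ → ℂ) : Prop :=
  DifferentiableOn ℂ f unitDisk ∧ ∃ S : ℝ → ℂ → ℂ, Generates f S

/-- `f` generates a one-parameter group of automorphisms of the disk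
(equivalently, both `f` and `-f` are generators). -/
def GeneratesGroupOfAutomorphisms (f : ℂ → ℂ) : Prop :=
  IsGenerator f ∧ IsGenerator (fun z => -f z)

/-- Hyperbolic automorphism of the disk: an automorphism with boundary Denjoy–Wolff point `τ`
and angular derivative `0 < F'(τ) < 1`. -/
def IsHyperbolicAut (F : ℂ → ℂ) : Prop :=
  IsAutomorphismOfDisk F ∧ ∃ τ : ℂ, ‖τ‖ = 1 ∧ IsDenjoyWolffPt F τ ∧
    ∃ α : ℝ, 0 < α ∧ α < 1 ∧ AngularLimAt (fun z => (F z - τ) / (z - τ)) τ (α : ℂ)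

/-- Parabolic automorphism of the disk: an automorphism with boundary Denjoy–Wolff point `τ`
and angular derivative `F'(τ) = 1`. -/
def IsParabolicAut (F : ℂ → ℂ) : Prop :=
  IsAutomorphismOfDisk F ∧ ∃ τ : ℂ, ‖τ‖ = 1 ∧ IsDenjoyWolffPt F τ ∧
    AngularLimAt (fun z => (F z - τ) / (z - τ)) τ 1

namespace Stmt17Aux

open Complex Filter Set Metric

variable {f : ℂ → ℂ} {S : ℝ → ℂ → ℂ}

lemma S_maps (hS : Generates f S) {t : ℝ} (ht : 0 ≤ t) {z : ℂ} (hz : z ∈ unitDisk) :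
    S t z ∈ unitDisk := (hS.1.1 t ht).2 hz

lemma S_zero (hS : Generates f S) {z : ℂ} (hz : z ∈ unitDisk) : S 0 z = z := by
  have h0 : S 0 z ∈ unitDisk := S_maps hS le_rfl hz
  have h1 : Tendsto (fun t : ℝ => S t z) (nhdsWithin 0 (Set.Ioi 0)) (nhds z) := hS.1.2.2 z hz
  have h2 : Tendsto (fun t : ℝ => S t (S 0 z)) (nhdsWithin 0 (Set.Ioi 0)) (nhds (S 0 z)) :=
    hS.1.2.2 _ h0
  have h3 : (fun t : ℝ => S t (S 0 z)) =ᶠ[nhdsWithin 0 (Set.Ioi 0)] (fun t => S t z) := by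
    filter_upwards [self_mem_nhdsWithin] with t ht
    have := hS.1.2.1 t (le_of_lt ht) 0 le_rfl z hz
    simpa using this.symm
  exact tendsto_nhds_unique (h2.congr' h3) h1

lemma S_deriv0 (hS : Generates f S) {z : ℂ} (hz : z ∈ unitDisk) :
    HasDerivWithinAt (fun t : ℝ => S t z) (-(f z)) (Set.Ici 0) 0 := by
  rw [hasDerivWithinAt_iff_tendsto_slope]
  have hset : Set.Ici (0:ℝ) \ {0} = Set.Ioi 0 := by
    ext x
    simp only [Set.mem_diff, Set.mem_Ici, Set.mem_singleton_iff, Set.mem_Ioi]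
    constructor
    · rintro ⟨h1, h2⟩; exact lt_of_le_of_ne h1 (Ne.symm h2)
    · intro h; exact ⟨le_of_lt h, ne_of_gt h⟩
  rw [hset]
  have h1 := (hS.2 z hz).neg
  refine h1.congr' ?_
  filter_upwards [self_mem_nhdsWithin] with t ht
  have ht0 : (t : ℂ) ≠ 0 := by
    exact_mod_cast ne_of_gt (Set.mem_Ioi.mp ht)
  simp only [slope_def_module, S_zero hS hz, vsub_eq_sub, sub_zero]
  rw [Complex.real_smul]
  push_cast
  field_simp
  ring

end Stmt17Aux
namespace Stmt17Aux

lemma S_derivt (hS : Generates f S) {z : ℂ} (hz : z ∈ unitDisk) {t : ℝ} (ht : 0 ≤ t) :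
    HasDerivWithinAt (fun s : ℝ => S s z) (-(f (S t z))) (Set.Ici t) t := by
  have hw : S t z ∈ unitDisk := S_maps hS ht hz
  have h0 : HasDerivWithinAt (fun h : ℝ => S h (S t z)) (-(f (S t z))) (Set.Ici 0) 0 :=
    S_deriv0 hS hw
  have hshift : HasDerivWithinAt (fun s : ℝ => s - t) 1 (Set.Ici t) t := by
    simpa using ((hasDerivAt_id t).sub_const t).hasDerivWithinAt (s := Set.Ici t)
  have hmaps : Set.MapsTo (fun s : ℝ => s - t) (Set.Ici t) (Set.Ici 0) := fun s hs => by
    simp only [Set.mem_Ici] at *; linarith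
  have hcomp := HasDerivWithinAt.scomp_of_eq t h0 hshift hmaps (by norm_num)
  simp only [one_smul] at hcomp
  refine hcomp.congr ?_ ?_
  · intro s hs
    have hs' : 0 ≤ s - t := by simp only [Set.mem_Ici] at hs; linarith
    have := hS.1.2.1 (s - t) hs' t ht z hz
    simp only [Function.comp]
    rw [← this, sub_add_cancel]
  · have := hS.1.2.1 (t - t) (by simp) t ht z hz
    simp only [Function.comp]
    rw [← this]
    norm_num

lemma ball_subset_disk {z : ℂ} (hz : z ∈ unitDisk) :
    Metric.ball z (1 - ‖z‖) ⊆ unitDisk := by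
  intro u hu
  have h1 : dist u z < 1 - ‖z‖ := Metric.mem_ball.mp hu
  have h2 : ‖u - z‖ = dist u z := (dist_eq_norm u z).symm
  have : ‖u‖ ≤ ‖u - z‖ + ‖z‖ := by
    simpa using norm_add_le (u - z) z
  have : ‖u‖ < 1 := by rw [h2] at this; linarith
  exact this

lemma schwarz_bound {F : ℂ → ℂ} (hF : HolSelfMap F) {z w : ℂ} (hz : z ∈ unitDisk)
    (hw : w ∈ Metric.ball z (1 - ‖z‖)) :
    dist (F w) (F z) ≤ 2 / (1 - ‖z‖) * dist w z := by
  have hsub := ball_subset_disk hz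
  refine Complex.dist_le_div_mul_dist_of_mapsTo_ball (hF.1.mono hsub) ?_ hw
  intro u hu
  have h1 : ‖F u‖ < 1 := hF.2 (hsub hu)
  have h2 : ‖F z‖ < 1 := hF.2 hz
  have : ‖F u - F z‖ < 2 := by
    calc ‖F u - F z‖ ≤ ‖F u‖ + ‖F z‖ :=
      norm_sub_le _ _
    _ < 2 := by linarith
  simpa [Metric.mem_ball, dist_eq] using this.le

lemma S_cont (hS : Generates f S) {z : ℂ} (hz : z ∈ unitDisk) :
    ContinuousOn (fun t : ℝ => S t z) (Set.Ici 0) := by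
  intro t₀ ht₀
  have ht₀' : (0:ℝ) ≤ t₀ := ht₀
  rw [Metric.continuousWithinAt_iff]
  intro ε hε
  have habs : ‖z‖ < 1 := hz
  have hden : 0 < 1 - ‖z‖ := by linarith
  set C : ℝ := 2 / (1 - ‖z‖) with hC_def
  have hC : 0 < C := by positivity
  set ε' : ℝ := min (ε / (C + 1)) ((1 - ‖z‖) / 2) with hε'_def
  have hε' : 0 < ε' := by
    apply lt_min
    · positivity
    · positivity
  have h1 := hS.1.2.2 z hz
  rw [Metric.tendsto_nhdsWithin_nhds] at h1
  obtain ⟨δ, hδ, hδ'⟩ := h1 ε' hε'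
  refine ⟨δ, hδ, ?_⟩
  intro s hs hst
  have hs' : (0:ℝ) ≤ s := hs
  have key : ∀ u : ℝ, 0 ≤ u → dist (S u z) z < ε' →
      ∀ v : ℝ, 0 ≤ v → dist (S v (S u z)) (S v z) < ε := by
    intro u hu hdu v hv
    have hball : S u z ∈ Metric.ball z (1 - ‖z‖) := by
      rw [Metric.mem_ball]
      calc dist (S u z) z < ε' := hdu
      _ ≤ (1 - ‖z‖) / 2 := min_le_right _ _
      _ < 1 - ‖z‖ := by linarith
    have hb := schwarz_bound (hS.1.1 v hv) hz hball
    calc dist (S v (S u z)) (S v z) ≤ C * dist (S u z) z := hb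
    _ ≤ C * ε' := by nlinarith [dist_nonneg (x := S u z) (y := z)]
    _ ≤ C * (ε / (C + 1)) := by
        have := min_le_left (ε / (C + 1)) ((1 - ‖z‖) / 2)
        nlinarith
    _ < ε := by
        rw [mul_comm, div_mul_eq_mul_div, div_lt_iff₀ (by linarith : (0:ℝ) < C + 1)]
        nlinarith
  rcases lt_trichotomy s t₀ with h | h | h
  · -- s < t₀ : S t₀ z = S s (S (t₀ - s) z)
    have hd : 0 < t₀ - s := by linarith
    have hdist : dist (S (t₀ - s) z) z < ε' := by
      apply hδ' (Set.mem_Ioi.mpr hd)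
      rw [Real.dist_eq, sub_zero, abs_of_pos hd]
      rw [Real.dist_eq] at hst
      rw [abs_of_neg (by linarith : s - t₀ < 0)] at hst
      linarith
    have hsg := hS.1.2.1 s hs' (t₀ - s) (le_of_lt hd) z hz
    have heq : S t₀ z = S s (S (t₀ - s) z) := by
      rw [← hsg]; norm_num
    rw [dist_comm, heq]
    exact key (t₀ - s) (le_of_lt hd) hdist s hs'
  · simp [h, hε]
  · have hd : 0 < s - t₀ := by linarith
    have hdist : dist (S (s - t₀) z) z < ε' := by
      apply hδ' (Set.mem_Ioi.mpr hd)
      rw [Real.dist_eq, sub_zero, abs_of_pos hd]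
      rw [Real.dist_eq, abs_of_pos (by linarith : 0 < s - t₀)] at hst
      linarith
    have hsg := hS.1.2.1 t₀ ht₀' (s - t₀) (le_of_lt hd) z hz
    have heq : S s z = S t₀ (S (s - t₀) z) := by
      rw [← hsg]; norm_num
    rw [heq]
    exact key (s - t₀) (le_of_lt hd) hdist t₀ ht₀'

end Stmt17Aux
namespace Stmt17Aux

open intervalIntegral MeasureTheory

lemma S_hasDerivAt (hS : Generates f S) (hfc : ContinuousOn f unitDisk)
    {z : ℂ} (hz : z ∈ unitDisk) {b t : ℝ} (ht : t ∈ Set.Ioo 0 b) :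
    HasDerivAt (fun s : ℝ => S s z) (-(f (S t z))) t := by
  set u : ℝ → ℂ := fun s => S s z with hu_def
  set g : ℝ → ℂ := fun s => f (S s z) with hg_def
  have hb : (0:ℝ) < b := lt_trans ht.1 ht.2
  have hu_cont : ContinuousOn u (Set.Icc 0 b) := (S_cont hS hz).mono Set.Icc_subset_Ici_self
  have hmapsd : ∀ s ∈ Set.Icc (0:ℝ) b, u s ∈ unitDisk := fun s hs => S_maps hS hs.1 hz
  have hg_cont : ContinuousOn g (Set.Icc 0 b) := hfc.comp hu_cont hmapsd
  have hgi : ∀ s ∈ Set.Icc (0:ℝ) b, IntervalIntegrable g volume 0 s := by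
    intro s hs
    apply ContinuousOn.intervalIntegrable
    apply hg_cont.mono
    rw [Set.uIcc_of_le hs.1]
    exact Set.Icc_subset_Icc le_rfl hs.2
  have hIcc_int : IntegrableOn g (Set.Icc 0 b) volume :=
    hg_cont.integrableOn_Icc
  set φ : ℝ → ℂ := fun s => u s + ∫ x in (0:ℝ)..s, g x with hφ_def
  have hφ_cont : ContinuousOn φ (Set.Icc 0 b) :=
    by
    refine hu_cont.add ?_
    have h2 : Set.uIcc (0:ℝ) b = Set.Icc 0 b := Set.uIcc_of_le (le_of_lt hb)
    have := intervalIntegral.continuousOn_primitive_interval (μ := volume) (f := g) (a := 0) (b := b) (by rwa [h2])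
    rwa [h2] at this
  have hφ_deriv : ∀ x ∈ Set.Ico (0:ℝ) b, HasDerivWithinAt φ 0 (Set.Ici x) x := by
    intro x hx
    have hu' : HasDerivWithinAt u (-(f (S x z))) (Set.Ici x) x := S_derivt hS hz hx.1
    have hint' : HasDerivWithinAt (fun s => ∫ y in (0:ℝ)..s, g y) (g x) (Set.Ici x) x := by
      have hmeas : StronglyMeasurableAtFilter g (nhdsWithin x (Set.Ioi x)) := by
        refine ⟨Set.Icc x b, ?_, ?_⟩
        · apply nhdsWithin_mono x Set.Ioi_subset_Ici_self
          rw [← nhdsWithin_Icc_eq_nhdsGE hx.2]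
          exact self_mem_nhdsWithin
        · exact ((hg_cont.mono (Set.Icc_subset_Icc hx.1 le_rfl)).aestronglyMeasurable
            measurableSet_Icc)
      have hcw : ContinuousWithinAt g (Set.Ioi x) x := by
        have h1 : ContinuousWithinAt g (Set.Icc x b) x :=
          (hg_cont.mono (Set.Icc_subset_Icc hx.1 le_rfl)) x (Set.mem_Icc.mpr ⟨le_rfl, le_of_lt hx.2⟩)
        have h2 : ContinuousWithinAt g (Set.Ici x) x := by
          rwa [ContinuousWithinAt, ← nhdsWithin_Icc_eq_nhdsGE hx.2]
        exact h2.mono Set.Ioi_subset_Ici_self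
      exact intervalIntegral.integral_hasDerivWithinAt_right
        (hgi x ⟨hx.1, le_of_lt hx.2⟩) hmeas hcw
    have := hu'.add hint'
    exact this.congr_deriv (by simp [hg_def])
  have hφ_const := constant_of_has_deriv_right_zero hφ_cont hφ_deriv
  have hrep : ∀ x ∈ Set.Icc (0:ℝ) b, u x = z - ∫ y in (0:ℝ)..x, g y := by
    intro x hx
    have h1 := hφ_const x hx
    have h2 : φ 0 = z := by
      simp only [hφ_def, intervalIntegral.integral_same, add_zero]
      exact S_zero hS hz
    rw [h2] at h1
    have : u x + ∫ y in (0:ℝ)..x, g y = z := h1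
    linear_combination this
  -- two-sided derivative at interior point t
  have hmem_nhds : Set.Icc (0:ℝ) b ∈ nhds t := Icc_mem_nhds ht.1 ht.2
  have hFTC : HasDerivAt (fun x => ∫ y in (0:ℝ)..x, g y) (g t) t := by
    apply intervalIntegral.integral_hasDerivAt_right (hgi t ⟨le_of_lt ht.1, le_of_lt ht.2⟩)
    · exact ⟨Set.Icc 0 b, hmem_nhds, (hg_cont.aestronglyMeasurable measurableSet_Icc)⟩
    · exact hg_cont.continuousAt hmem_nhds
  have hRHS : HasDerivAt (fun x => z - ∫ y in (0:ℝ)..x, g y) (-(g t)) t := by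
    exact ((hasDerivAt_const t z).sub hFTC).congr_deriv (by simp)
  refine hRHS.congr_of_eventuallyEq ?_
  filter_upwards [hmem_nhds] with x hx
  exact hrep x hx

lemma quad_lipschitzOnWith (a b c : ℂ) :
    LipschitzOnWith (2 * ‖a‖₊ + ‖b‖₊) (fun w : ℂ => a * w ^ 2 + b * w + c)
      (Metric.closedBall 0 1) := by
  rw [lipschitzOnWith_iff_dist_le_mul]
  intro x hx y hy
  have hx1 : ‖x‖ ≤ 1 := by simpa [Complex.dist_eq] using Metric.mem_closedBall.mp hx
  have hy1 : ‖y‖ ≤ 1 := by simpa [Complex.dist_eq] using Metric.mem_closedBall.mp hy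
  have hkey : (a * x ^ 2 + b * x + c) - (a * y ^ 2 + b * y + c) = (a * (x + y) + b) * (x - y) := by
    ring
  rw [Complex.dist_eq, Complex.dist_eq, hkey, norm_mul]
  have h1 : ‖a * (x + y) + b‖ ≤ 2 * ‖a‖ + ‖b‖ := by
    calc ‖a * (x + y) + b‖ ≤ ‖a * (x + y)‖ + ‖b‖ :=
      norm_add_le _ _
    _ ≤ ‖a‖ * (‖x‖ + ‖y‖) + ‖b‖ := by
        rw [norm_mul]
        have := norm_add_le x y
        nlinarith [norm_nonneg a]
    _ ≤ 2 * ‖a‖ + ‖b‖ := by nlinarith [norm_nonneg a]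
  have h2 : ((2 * ‖a‖₊ + ‖b‖₊ : NNReal) : ℝ) = 2 * ‖a‖ + ‖b‖ := by
    push_cast
    simp
  rw [h2]
  have h3 := norm_nonneg (x - y)
  nlinarith

lemma S_inj (hS : Generates f S) {a b c : ℂ}
    (hquad : ∀ w ∈ unitDisk, f w = a * w ^ 2 + b * w + c)
    {t₁ : ℝ} (ht₁ : 0 ≤ t₁) {z z' : ℂ} (hz : z ∈ unitDisk) (hz' : z' ∈ unitDisk)
    (hcol : S t₁ z = S t₁ z') : z = z' := by
  have hfc : ContinuousOn f unitDisk := by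
    have : ContinuousOn (fun w : ℂ => a * w ^ 2 + b * w + c) unitDisk := by fun_prop
    exact this.congr hquad
  rcases eq_or_lt_of_le ht₁ with h | h
  · rw [← S_zero hS hz, ← S_zero hS hz', h, hcol]
  set P : ℂ → ℂ := fun w => a * w ^ 2 + b * w + c with hP_def
  set K : NNReal := 2 * ‖a‖₊ + ‖b‖₊ with hK_def
  have hlip : ∀ s : ℝ, LipschitzOnWith K P (Metric.closedBall 0 1) :=
    fun _ => quad_lipschitzOnWith a b c
  set ub : ℝ → ℂ := fun s => S (t₁ - s) z with hub_def
  set vb : ℝ → ℂ := fun s => S (t₁ - s) z' with hvb_def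
  have key : ∀ (w : ℂ), w ∈ unitDisk → ContinuousOn (fun s => S (t₁ - s) w) (Set.Icc 0 t₁) ∧
      (∀ s ∈ Set.Ico (0:ℝ) t₁,
        HasDerivWithinAt (fun s' => S (t₁ - s') w) (P (S (t₁ - s) w)) (Set.Ici s) s) ∧
      (∀ s ∈ Set.Ico (0:ℝ) t₁, S (t₁ - s) w ∈ Metric.closedBall (0:ℂ) 1) := by
    intro w hw
    refine ⟨?_, ?_, ?_⟩
    · apply (S_cont hS hw).comp (by fun_prop : Continuous (fun s : ℝ => t₁ - s)).continuousOn
      intro s hs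
      simp only [Set.mem_Icc] at hs
      simp only [Set.mem_Ici]
      linarith
    · intro s hs
      have hts : t₁ - s ∈ Set.Ioo 0 (t₁ + 1) := by
        constructor <;> [skip; skip] <;> · simp only [Set.mem_Ico] at hs; linarith [hs.1, hs.2]
      have hD : HasDerivAt (fun r : ℝ => S r w) (-(f (S (t₁ - s) w))) (t₁ - s) :=
        S_hasDerivAt hS hfc hw hts
      have hshift : HasDerivAt (fun s' : ℝ => t₁ - s') (-1 : ℝ) s := by
        simpa using ((hasDerivAt_id s).const_sub t₁)
      have hcomp := HasDerivAt.scomp s hD hshift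
      have hmem : S (t₁ - s) w ∈ unitDisk := S_maps hS (by linarith [hts.1]) hw
      have : ((-1 : ℝ) • -f (S (t₁ - s) w)) = P (S (t₁ - s) w) := by
        rw [hquad _ hmem]
        simp only [hP_def, neg_smul, one_smul, neg_neg]
      rw [this] at hcomp
      exact hcomp.hasDerivWithinAt
    · intro s hs
      have hmem : S (t₁ - s) w ∈ unitDisk := S_maps hS (by simp only [Set.mem_Ico] at hs; linarith [hs.2]) hw
      rw [Metric.mem_closedBall]
      simp only [Complex.dist_eq, sub_zero]
      exact le_of_lt hmem
  obtain ⟨hu_cont, hu_deriv, hu_mem⟩ := key z hz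
  obtain ⟨hv_cont, hv_deriv, hv_mem⟩ := key z' hz'
  have heq := ODE_solution_unique_of_mem_Icc_right (fun s _ => hlip s) hu_cont hu_deriv hu_mem
    hv_cont hv_deriv hv_mem (by simpa [hub_def, hvb_def] using hcol)
  have := heq (Set.right_mem_Icc.mpr (le_of_lt h))
  simp only [hub_def, hvb_def, sub_self] at this
  rw [S_zero hS hz, S_zero hS hz'] at this
  exact this

end Stmt17Aux
namespace Stmt17Aux

lemma CR_const (hS : Generates f S) {a b c : ℂ}
    (hquad : ∀ w ∈ unitDisk, f w = a * w ^ 2 + b * w + c)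
    {z1 z2 z3 z4 : ℂ} (h1 : z1 ∈ unitDisk) (h2 : z2 ∈ unitDisk) (h3 : z3 ∈ unitDisk)
    (h4 : z4 ∈ unitDisk) (h14 : z1 ≠ z4) (h23 : z2 ≠ z3) {T : ℝ} (hT : 0 ≤ T) :
    (S T z1 - S T z3) * (S T z2 - S T z4) * ((z1 - z4) * (z2 - z3)) =
      (z1 - z3) * (z2 - z4) * ((S T z1 - S T z4) * (S T z2 - S T z3)) := by
  have hDne : ∀ t : ℝ, 0 ≤ t → (S t z1 - S t z4) * (S t z2 - S t z3) ≠ 0 := by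
    intro t ht
    apply mul_ne_zero
    · exact sub_ne_zero.mpr (fun hc => h14 (S_inj hS hquad ht h1 h4 hc))
    · exact sub_ne_zero.mpr (fun hc => h23 (S_inj hS hquad ht h2 h3 hc))
  have c1 : ContinuousOn (fun t => S t z1) (Set.Icc 0 T) := (S_cont hS h1).mono Set.Icc_subset_Ici_self
  have c2 : ContinuousOn (fun t => S t z2) (Set.Icc 0 T) := (S_cont hS h2).mono Set.Icc_subset_Ici_self
  have c3 : ContinuousOn (fun t => S t z3) (Set.Icc 0 T) := (S_cont hS h3).mono Set.Icc_subset_Ici_self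
  have c4 : ContinuousOn (fun t => S t z4) (Set.Icc 0 T) := (S_cont hS h4).mono Set.Icc_subset_Ici_self
  have hψcont : ContinuousOn (fun t =>
      ((S t z1 - S t z3) * (S t z2 - S t z4)) / ((S t z1 - S t z4) * (S t z2 - S t z3)))
      (Set.Icc 0 T) :=
    ((c1.sub c3).mul (c2.sub c4)).div ((c1.sub c4).mul (c2.sub c3))
      (fun t ht => hDne t ht.1)
  have hψderiv : ∀ t ∈ Set.Ico (0:ℝ) T, HasDerivWithinAt (fun t =>
      ((S t z1 - S t z3) * (S t z2 - S t z4)) / ((S t z1 - S t z4) * (S t z2 - S t z3)))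
      0 (Set.Ici t) t := by
    intro t ht
    have m1 : S t z1 ∈ unitDisk := S_maps hS ht.1 h1
    have m2 : S t z2 ∈ unitDisk := S_maps hS ht.1 h2
    have m3 : S t z3 ∈ unitDisk := S_maps hS ht.1 h3
    have m4 : S t z4 ∈ unitDisk := S_maps hS ht.1 h4
    have d1 : HasDerivWithinAt (fun s => S s z1)
        (-(a * (S t z1) ^ 2 + b * (S t z1) + c)) (Set.Ici t) t := by
      have := S_derivt hS h1 ht.1; rwa [hquad _ m1] at this
    have d2 : HasDerivWithinAt (fun s => S s z2)
        (-(a * (S t z2) ^ 2 + b * (S t z2) + c)) (Set.Ici t) t := by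
      have := S_derivt hS h2 ht.1; rwa [hquad _ m2] at this
    have d3 : HasDerivWithinAt (fun s => S s z3)
        (-(a * (S t z3) ^ 2 + b * (S t z3) + c)) (Set.Ici t) t := by
      have := S_derivt hS h3 ht.1; rwa [hquad _ m3] at this
    have d4 : HasDerivWithinAt (fun s => S s z4)
        (-(a * (S t z4) ^ 2 + b * (S t z4) + c)) (Set.Ici t) t := by
      have := S_derivt hS h4 ht.1; rwa [hquad _ m4] at this
    have hdiv := ((d1.sub d3).mul (d2.sub d4)).div ((d1.sub d4).mul (d2.sub d3)) (hDne t ht.1)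
    refine hdiv.congr_deriv ?_
    rw [div_eq_zero_iff]
    left
    simp only [Pi.sub_apply, Pi.mul_apply, Pi.neg_apply, Pi.add_apply]
    ring
  have hconst := constant_of_has_deriv_right_zero hψcont hψderiv T (Set.right_mem_Icc.mpr hT)
  have hD0 : (S 0 z1 - S 0 z4) * (S 0 z2 - S 0 z3) ≠ 0 := hDne 0 le_rfl
  have hDT : (S T z1 - S T z4) * (S T z2 - S T z3) ≠ 0 := hDne T hT
  rw [div_eq_div_iff hDT hD0] at hconst
  rw [S_zero hS h1, S_zero hS h2, S_zero hS h3, S_zero hS h4] at hconst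
  linear_combination hconst

end Stmt17Aux
namespace Stmt17Aux

lemma zero_mem_disk : (0:ℂ) ∈ unitDisk := by
  show ‖0‖ < 1; simp

lemma half_mem_disk : (1/2 : ℂ) ∈ unitDisk := by
  show ‖1/2‖ < 1
  rw [norm_div, norm_one, Complex.norm_two]
  norm_num

lemma neg_half_mem_disk : (-(1/2) : ℂ) ∈ unitDisk := by
  show ‖-(1/2)‖ < 1
  rw [norm_neg, norm_div, norm_one, Complex.norm_two]
  norm_num

lemma quad_implies_LFT (hS : Generates f S) {a b c : ℂ}
    (hquad : ∀ w ∈ unitDisk, f w = a * w ^ 2 + b * w + c)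
    {t₀ : ℝ} (ht₀ : 0 ≤ t₀) : IsLFTOn (S t₀) := by
  set P' : ℂ := S t₀ 0 with hP'
  set Q' : ℂ := S t₀ (1/2) with hQ'
  set R' : ℂ := S t₀ (-(1/2)) with hR'
  have hPQ : P' ≠ Q' := fun h => by
    have := S_inj hS hquad ht₀ zero_mem_disk half_mem_disk h; norm_num at this
  have hPR : P' ≠ R' := fun h => by
    have := S_inj hS hquad ht₀ zero_mem_disk neg_half_mem_disk h; norm_num at this
  have hQR : Q' ≠ R' := fun h => by
    have := S_inj hS hquad ht₀ half_mem_disk neg_half_mem_disk h; norm_num at this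
  refine ⟨2*Q'*(P'-R') + 2*R'*(P'-Q'), Q'*(P'-R') - R'*(P'-Q'),
    2*(P'-R') + 2*(P'-Q'), Q' - R', ?_, ?_⟩
  · have hdet : (2*Q'*(P'-R') + 2*R'*(P'-Q'))*(Q' - R') -
        (Q'*(P'-R') - R'*(P'-Q'))*(2*(P'-R') + 2*(P'-Q'))
        = 4*(P'-R')*(P'-Q')*(R'-Q') := by ring
    rw [hdet]
    apply mul_ne_zero
    apply mul_ne_zero
    apply mul_ne_zero
    · norm_num
    · exact sub_ne_zero.mpr hPR
    · exact sub_ne_zero.mpr hPQ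
    · exact sub_ne_zero.mpr (Ne.symm hQR)
  intro z hz
  by_cases hz0 : z = 0
  · subst hz0
    rw [eq_div_iff (by
      have : (2*(P'-R') + 2*(P'-Q')) * 0 + (Q' - R') = Q' - R' := by ring
      rw [this]
      exact sub_ne_zero.mpr hQR)]
    show P' * _ = _
    ring
  by_cases hzq : z = 1/2
  · subst hzq
    rw [eq_div_iff (by
      have : (2*(P'-R') + 2*(P'-Q')) * (1/2) + (Q' - R') = 2*(P'-R') := by ring
      rw [this]
      exact mul_ne_zero two_ne_zero (sub_ne_zero.mpr hPR))]
    show Q' * _ = _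
    ring
  by_cases hzr : z = -(1/2)
  · subst hzr
    rw [eq_div_iff (by
      have : (2*(P'-R') + 2*(P'-Q')) * (-(1/2)) + (Q' - R') = -(2*(P'-Q')) := by ring
      rw [this]
      exact neg_ne_zero.mpr (mul_ne_zero two_ne_zero (sub_ne_zero.mpr hPQ)))]
    show R' * _ = _
    ring
  -- generic point
  have hcr := CR_const hS hquad hz zero_mem_disk half_mem_disk neg_half_mem_disk
      hzr (by norm_num) ht₀
  set w : ℂ := S t₀ z with hw
  have hkey : w * ((2*(P'-R') + 2*(P'-Q'))*z + (Q' - R'))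
      = (2*Q'*(P'-R') + 2*R'*(P'-Q'))*z + (Q'*(P'-R') - R'*(P'-Q')) := by
    linear_combination (-4 : ℂ) * hcr
  have hden : (2*(P'-R') + 2*(P'-Q'))*z + (Q' - R') ≠ 0 := by
    intro h0
    have hnum : (2*Q'*(P'-R') + 2*R'*(P'-Q'))*z + (Q'*(P'-R') - R'*(P'-Q')) = 0 := by
      rw [← hkey, h0, mul_zero]
    have hzero : (2*Q'*(P'-R') + 2*R'*(P'-Q'))*(Q' - R') -
        (Q'*(P'-R') - R'*(P'-Q'))*(2*(P'-R') + 2*(P'-Q')) = 0 := by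
      linear_combination (2*Q'*(P'-R') + 2*R'*(P'-Q')) * h0 -
        (2*(P'-R') + 2*(P'-Q')) * hnum
    have hdet : (2*Q'*(P'-R') + 2*R'*(P'-Q'))*(Q' - R') -
        (Q'*(P'-R') - R'*(P'-Q'))*(2*(P'-R') + 2*(P'-Q'))
        = 4*(P'-R')*(P'-Q')*(R'-Q') := by ring
    rw [hdet] at hzero
    have : (4:ℂ) ≠ 0 := by norm_num
    rcases mul_eq_zero.mp hzero with h | h
    rcases mul_eq_zero.mp h with h | h
    rcases mul_eq_zero.mp h with h | h
    · exact this h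
    · exact sub_ne_zero.mpr hPR h
    · exact sub_ne_zero.mpr hPQ h
    · exact sub_ne_zero.mpr (Ne.symm hQR) h
  rw [eq_div_iff hden]
  exact hkey

end Stmt17Aux
namespace Stmt17Aux

lemma LFT_nopole {F : ℂ → ℂ} (hF : HolSelfMap F) (hL : IsLFTOn F) :
    ∃ a b c d : ℂ, a*d - b*c ≠ 0 ∧ (∀ z ∈ unitDisk, c*z + d ≠ 0) ∧
      (∀ z ∈ unitDisk, F z = (a*z+b)/(c*z+d)) ∧
      (∀ u ∈ unitDisk, ∀ v ∈ unitDisk,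
        F u - F v = (a*d - b*c)*(u-v)/((c*u+d)*(c*v+d))) := by
  obtain ⟨a, b, c, d, hdet, hrep⟩ := hL
  have hnp : ∀ z ∈ unitDisk, c*z + d ≠ 0 := by
    intro z₀ hz₀ h0
    have hc : c ≠ 0 := by
      intro hc0
      rw [hc0, zero_mul, zero_add] at h0
      apply hdet
      rw [hc0, h0]; ring
    have hnum : a*z₀ + b ≠ 0 := by
      intro hn
      apply hdet
      have hd : d = -(c*z₀) := by linear_combination h0
      have hb : b = -(a*z₀) := by linear_combination hn
      rw [hd, hb]; ring
    have habs₀ : ‖z₀‖ < 1 := hz₀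
    set m : ℝ := ‖a*z₀+b‖ with hm
    have hm0 : 0 < m := norm_pos_iff.mpr hnum
    have hacpos : 0 < ‖a‖ + ‖c‖ := by
      have := norm_pos_iff.mpr hc
      have := norm_nonneg a
      linarith
    set δ : ℝ := min ((1 - ‖z₀‖)/2) (m / (‖a‖ + ‖c‖)) with hδdef
    have hδ1 : δ ≤ (1 - ‖z₀‖)/2 := min_le_left _ _
    have hδ2 : δ ≤ m / (‖a‖ + ‖c‖) := min_le_right _ _
    have hδpos : 0 < δ := lt_min (by linarith) (div_pos hm0 hacpos)
    set z : ℂ := z₀ + (δ:ℝ) with hzdef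
    have hzmem : z ∈ unitDisk := by
      show ‖z‖ < 1
      calc ‖z‖ ≤ ‖z₀‖ + ‖(δ:ℂ)‖ := norm_add_le _ _
      _ = ‖z₀‖ + δ := by rw [Complex.norm_of_nonneg hδpos.le]
      _ < 1 := by linarith
    have hFz : ‖F z‖ < 1 := hF.2 hzmem
    have hrepz := hrep z hzmem
    have hdenz : c*z + d = c*(δ:ℂ) := by
      rw [hzdef]; linear_combination h0
    have h1 : m - ‖a‖ * δ ≤ ‖a*z+b‖ := by
      have heq2 : a*z₀+b = (a*z+b) + (-(a*(δ:ℂ))) := by rw [hzdef]; ring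
      have h5 : ‖a*z₀+b‖ ≤ ‖a*z+b‖ + ‖-(a*(δ:ℂ))‖ := by
        rw [heq2]; exact norm_add_le _ _
      rw [norm_neg, norm_mul, Complex.norm_of_nonneg hδpos.le] at h5
      linarith
    have h2 : ‖c*z+d‖ = ‖c‖ * δ := by
      rw [hdenz, norm_mul, Complex.norm_of_nonneg hδpos.le]
    have h3 : (‖a‖ + ‖c‖) * δ ≤ m := by
      have := (le_div_iff₀ hacpos).mp hδ2
      linarith
    have h4 : ‖c‖ * δ ≤ ‖a*z+b‖ := by nlinarith
    rw [hrepz, norm_div, h2] at hFz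
    have hcδ : 0 < ‖c‖ * δ := mul_pos (norm_pos_iff.mpr hc) hδpos
    rw [div_lt_one hcδ] at hFz
    linarith
  refine ⟨a, b, c, d, hdet, hnp, hrep, ?_⟩
  intro u hu v hv
  rw [hrep u hu, hrep v hv]
  have h1 := hnp u hu
  have h2 := hnp v hv
  rw [div_sub_div _ _ h1 h2]
  ring

end Stmt17Aux
namespace Stmt17Aux

lemma LFT_implies_quad (hS : Generates f S) (hLFT : ∀ t : ℝ, 0 ≤ t → IsLFTOn (S t)) :
    ∀ z ∈ unitDisk, f z = (-4*f 0 + 2*f (1/2) + 2*f (-(1/2))) * z^2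
      + (f (1/2) - f (-(1/2))) * z + f 0 := by
  intro z hz
  by_cases hz0 : z = 0
  · subst hz0; ring
  by_cases hzq : z = 1/2
  · subst hzq; ring
  by_cases hzr : z = -(1/2)
  · subst hzr; ring
  have h14 : z - (-(1/2)) ≠ 0 := sub_ne_zero.mpr hzr
  have h23 : ((0:ℂ)) - 1/2 ≠ 0 := by norm_num
  set C0 : ℂ := ((z - 1/2) * ((0:ℂ) - (-(1/2)))) / ((z - (-(1/2))) * ((0:ℂ) - 1/2)) with hC0
  have hψ_eq : ∀ t : ℝ, t ∈ Set.Ioi (0:ℝ) →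
      ((S t z - S t (1/2)) * (S t 0 - S t (-(1/2)))) /
        ((S t z - S t (-(1/2))) * (S t 0 - S t (1/2))) = C0 := by
    intro t ht
    have ht' : (0:ℝ) ≤ t := le_of_lt ht
    obtain ⟨a, b, c, d, hdet, hnp, hrep, hdiff⟩ :=
      LFT_nopole (hS.1.1 t ht') (hLFT t ht')
    have k1 := hdiff z hz (1/2) half_mem_disk
    have k2 := hdiff 0 zero_mem_disk (-(1/2)) neg_half_mem_disk
    have k3 := hdiff z hz (-(1/2)) neg_half_mem_disk
    have k4 := hdiff 0 zero_mem_disk (1/2) half_mem_disk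
    have n_z := hnp z hz
    have n_p := hnp 0 zero_mem_disk
    have n_q := hnp (1/2) half_mem_disk
    have n_r := hnp (-(1/2)) neg_half_mem_disk
    have hD : (S t z - S t (-(1/2))) * (S t 0 - S t (1/2)) ≠ 0 := by
      rw [k3, k4]
      apply mul_ne_zero
      · exact div_ne_zero (mul_ne_zero hdet h14) (mul_ne_zero n_z n_r)
      · exact div_ne_zero (mul_ne_zero hdet h23) (mul_ne_zero n_p n_q)
    have hD0' : (z - (-(1/2))) * ((0:ℂ) - 1/2) ≠ 0 := mul_ne_zero h14 h23
    rw [hC0, div_eq_div_iff hD hD0']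
    rw [k1, k2, k3, k4]
    field_simp
  have hψ0 : ((S 0 z - S 0 (1/2)) * (S 0 0 - S 0 (-(1/2)))) /
        ((S 0 z - S 0 (-(1/2))) * (S 0 0 - S 0 (1/2))) = C0 := by
    rw [S_zero hS hz, S_zero hS half_mem_disk, S_zero hS neg_half_mem_disk,
      S_zero hS zero_mem_disk]
  have hd0 : HasDerivWithinAt (fun t : ℝ =>
      ((S t z - S t (1/2)) * (S t 0 - S t (-(1/2)))) /
        ((S t z - S t (-(1/2))) * (S t 0 - S t (1/2)))) 0 (Set.Ioi 0) 0 := by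
    exact (hasDerivWithinAt_const (0:ℝ) (Set.Ioi (0:ℝ)) C0).congr hψ_eq hψ0
  have dz : HasDerivWithinAt (fun s : ℝ => S s z) (-(f z)) (Set.Ioi 0) 0 :=
    (S_deriv0 hS hz).mono Set.Ioi_subset_Ici_self
  have dp : HasDerivWithinAt (fun s : ℝ => S s 0) (-(f 0)) (Set.Ioi 0) 0 :=
    (S_deriv0 hS zero_mem_disk).mono Set.Ioi_subset_Ici_self
  have dq : HasDerivWithinAt (fun s : ℝ => S s (1/2)) (-(f (1/2))) (Set.Ioi 0) 0 :=
    (S_deriv0 hS half_mem_disk).mono Set.Ioi_subset_Ici_self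
  have dr : HasDerivWithinAt (fun s : ℝ => S s (-(1/2))) (-(f (-(1/2)))) (Set.Ioi 0) 0 :=
    (S_deriv0 hS neg_half_mem_disk).mono Set.Ioi_subset_Ici_self
  have hD0 : (S 0 z - S 0 (-(1/2))) * (S 0 0 - S 0 (1/2)) ≠ 0 := by
    rw [S_zero hS hz, S_zero hS neg_half_mem_disk, S_zero hS zero_mem_disk,
      S_zero hS half_mem_disk]
    exact mul_ne_zero h14 h23
  have hdiv := ((dz.sub dq).mul (dp.sub dr)).div ((dz.sub dr).mul (dp.sub dq)) hD0
  have e1 := hdiv.derivWithin (uniqueDiffWithinAt_Ioi (0:ℝ))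
  have e2 := hd0.derivWithin (uniqueDiffWithinAt_Ioi (0:ℝ))
  have hE := e1.symm.trans e2
  simp only [Pi.sub_apply, Pi.mul_apply, S_zero hS hz, S_zero hS half_mem_disk, S_zero hS neg_half_mem_disk,
    S_zero hS zero_mem_disk] at hE
  have hD0'' : ((z - (-(1/2))) * ((0:ℂ) - 1/2)) ≠ 0 := mul_ne_zero h14 h23
  rw [div_eq_zero_iff] at hE
  rcases hE with hX | hX
  · linear_combination (4:ℂ) * hX
  · exact absurd hX (pow_ne_zero 2 hD0'')

end Stmt17Aux

theorem stmt17 (f : ℂ → ℂ) (hf : IsGenerator f)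
    (S : ℝ → ℂ → ℂ) (hS : Generates f S) :
    (∀ t : ℝ, 0 ≤ t → IsLFTOn (S t)) ↔
      ∃ a b c : ℂ, ∀ z ∈ unitDisk, f z = a * z ^ 2 + b * z + c := by
  constructor
  · intro hLFT
    exact ⟨-4*f 0 + 2*f (1/2) + 2*f (-(1/2)), f (1/2) - f (-(1/2)), f 0,
      Stmt17Aux.LFT_implies_quad hS hLFT⟩
  · rintro ⟨a, b, c, hquad⟩ t ht
    exact Stmt17Aux.quad_implies_LFT hS hquad ht
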